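/- Let G ⊂ ℝⁿ (n ≥ 1) be a convex body. Then there exists C > 0 such that for all nonempty compact convex subsets K, L of G, ρ_G(K,L) ≤ C·d_H(K,L). -/

import Mathlib

open MeasureTheory Metric Pointwise

/-- `ρ_G(K,L) := 2·Vol(G + K ∪̃ L) − Vol(G + K) − Vol(G + L)`. -/
noncomputable def rhoDist {n : ℕ} (G K L : Set (EuclideanSpace ℝ (Fin n))) : ℝ :=
  2 * (volume (G + closure (convexHull ℝ (K ∪ L)))).toReal
    - (volume (G + K)).toReal - (volume (G + L)).toReal

private lemma pow_one_add_sub_one_le {t T : ℝ} (ht : 0 ≤ t) (htT : t ≤ T) (n : ℕ) :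
    (1 + t) ^ n - 1 ≤ n * (1 + T) ^ (n - 1) * t := by
  have h1T : (1:ℝ) ≤ 1 + T := by linarith
  have hgs := geom_sum_mul (1 + t) n
  have key : (1 + t) ^ n - 1 = (∑ i ∈ Finset.range n, (1 + t) ^ i) * t := by
    rw [← hgs]; ring_nf
  rw [key]
  have hsum : (∑ i ∈ Finset.range n, (1 + t) ^ i) ≤ n * (1 + T) ^ (n - 1) := by
    calc (∑ i ∈ Finset.range n, (1 + t) ^ i)
        ≤ ∑ _i ∈ Finset.range n, (1 + T) ^ (n - 1) := by
          apply Finset.sum_le_sum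
          intro i hi
          calc (1 + t) ^ i ≤ (1 + T) ^ i := by
                apply pow_le_pow_left₀ (by linarith) (by linarith)
            _ ≤ (1 + T) ^ (n - 1) :=
                pow_le_pow_right₀ h1T (Nat.le_pred_of_lt (Finset.mem_range.1 hi))
      _ = n * (1 + T) ^ (n - 1) := by
          rw [Finset.sum_const, Finset.card_range, nsmul_eq_mul]
  exact mul_le_mul_of_nonneg_right hsum ht

private lemma vadd_set_add {n : ℕ} (a : EuclideanSpace ℝ (Fin n))
    (s t : Set (EuclideanSpace ℝ (Fin n))) : a +ᵥ (s + t) = (a +ᵥ s) + t := by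
  ext x
  simp only [Set.mem_vadd_set, Set.mem_add]
  constructor
  · rintro ⟨y, ⟨u, hu, v, hv, rfl⟩, rfl⟩
    exact ⟨a +ᵥ u, ⟨u, hu, rfl⟩, v, hv, by simp [vadd_eq_add]; abel⟩
  · rintro ⟨w, ⟨u, hu, rfl⟩, v, hv, rfl⟩
    exact ⟨u + v, ⟨u, hu, v, hv, rfl⟩, by simp [vadd_eq_add]; abel⟩

private lemma vol_bound {n : ℕ} (x0 : EuclideanSpace ℝ (Fin n)) {r R : ℝ} (hr : 0 < r)
    (G K S : Set (EuclideanSpace ℝ (Fin n)))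
    (hball : closedBall x0 r ⊆ G) (hGR : G ⊆ closedBall 0 R)
    (hGcv : Convex ℝ G) (hGcp : IsCompact G)
    (hKcv : Convex ℝ K) (hKcp : IsCompact K) (hKne : K.Nonempty) (hKG : K ⊆ G)
    {d : ℝ} (hd0 : 0 ≤ d) (hdR : d ≤ 2 * R)
    (hS : S ⊆ K + closedBall 0 d) :
    (volume (G + S)).toReal ≤ (volume (G + K)).toReal
      + (n * (1 + 2 * R / r) ^ (n - 1)
          * (volume (closedBall (0 : EuclideanSpace ℝ (Fin n)) (2 * R))).toReal / r) * d := by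
  obtain ⟨k0, hk0⟩ := hKne
  set c : EuclideanSpace ℝ (Fin n) := x0 + k0 with hc
  set A : Set (EuclideanSpace ℝ (Fin n)) := G + K with hA
  set D : Set (EuclideanSpace ℝ (Fin n)) := closedBall 0 d with hD
  set A' : Set (EuclideanSpace ℝ (Fin n)) := (-c) +ᵥ A with hA'
  have hAcp : IsCompact A := hGcp.add hKcp
  have hDcp : IsCompact D := isCompact_closedBall 0 d
  -- G + S ⊆ A + D
  have hsub1 : G + S ⊆ A + D := by
    have h1 : G + S ⊆ G + (K + D) := Set.add_subset_add_left hS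
    rwa [← add_assoc] at h1
  -- ball of radius r inside A'
  have hrA' : closedBall (0 : EuclideanSpace ℝ (Fin n)) r ⊆ A' := by
    intro v hv
    refine ⟨c + v, ?_, by simp only [vadd_eq_add]; abel⟩
    have hx0v : x0 + v ∈ G := by
      apply hball
      simp only [mem_closedBall, dist_self_add_left]
      rwa [mem_closedBall_zero_iff] at hv
    exact ⟨x0 + v, hx0v, k0, hk0, by rw [hc]; abel⟩
  have h0A' : (0 : EuclideanSpace ℝ (Fin n)) ∈ A' := hrA' (mem_closedBall_self hr.le)
  have hA'cv : Convex ℝ A' := (hGcv.add hKcv).vadd _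
  -- A' + D ⊆ (1 + d/r) • A'
  have hsub2 : A' + D ⊆ (1 + d / r) • A' := by
    have hdr0 : 0 ≤ d / r := div_nonneg hd0 hr.le
    intro x hx
    obtain ⟨a, ha, v, hv, rfl⟩ := hx
    have hvmem : v ∈ (d / r) • A' := by
      rcases eq_or_lt_of_le hd0 with hd | hd
      · have hv0 : v = 0 := by
          rw [hD, mem_closedBall_zero_iff, ← hd] at hv
          exact norm_le_zero_iff.1 hv
        exact ⟨0, h0A', by simp [hv0]⟩
      · refine ⟨(r / d) • v, ?_, ?_⟩
        · apply hrA'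
          rw [mem_closedBall_zero_iff, norm_smul, Real.norm_eq_abs,
            abs_of_nonneg (div_nonneg hr.le hd0)]
          rw [hD, mem_closedBall_zero_iff] at hv
          calc r / d * ‖v‖ ≤ r / d * d := by
                apply mul_le_mul_of_nonneg_left hv (div_nonneg hr.le hd0)
            _ = r := by field_simp
        · show (d / r) • ((r / d) • v) = v
          rw [smul_smul, div_mul_div_comm, mul_comm d r, div_self (by positivity), one_smul]
    have hrw : (1 + d / r) • A' = (1 : ℝ) • A' + (d / r) • A' :=
      hA'cv.add_smul (by norm_num) hdr0
    rw [hrw]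
    exact Set.add_mem_add (⟨a, ha, one_smul ℝ a⟩) hvmem
  -- volumes
  have hvolA' : volume A' = volume A := measure_vadd volume (-c) A
  have hvolAD : volume (A + D) = volume (A' + D) := by
    rw [hA', ← vadd_set_add, measure_vadd]
  have hfr : Module.finrank ℝ (EuclideanSpace ℝ (Fin n)) = n := finrank_euclideanSpace_fin
  have hsmul : volume ((1 + d / r) • A') = ENNReal.ofReal ((1 + d / r) ^ n) * volume A' := by
    rw [Measure.addHaar_smul_of_nonneg volume (by positivity) A', hfr]
  have hAfin : volume A ≠ ⊤ := hAcp.measure_lt_top.ne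
  have hle : volume (G + S) ≤ ENNReal.ofReal ((1 + d / r) ^ n) * volume A := by
    calc volume (G + S) ≤ volume (A + D) := measure_mono hsub1
      _ = volume (A' + D) := hvolAD
      _ ≤ volume ((1 + d / r) • A') := measure_mono hsub2
      _ = ENNReal.ofReal ((1 + d / r) ^ n) * volume A := by rw [hsmul, hvolA']
  have hfin2 : ENNReal.ofReal ((1 + d / r) ^ n) * volume A ≠ ⊤ :=
    ENNReal.mul_ne_top ENNReal.ofReal_ne_top hAfin
  have hstep : (volume (G + S)).toReal ≤ (1 + d / r) ^ n * (volume A).toReal := by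
    have := ENNReal.toReal_mono hfin2 hle
    rwa [ENNReal.toReal_mul, ENNReal.toReal_ofReal (by positivity)] at this
  -- bound on volume A
  have hAball : A ⊆ closedBall (0 : EuclideanSpace ℝ (Fin n)) (2 * R) := by
    rintro x ⟨g, hg, k, hk, rfl⟩
    rw [mem_closedBall_zero_iff]
    have hgR : ‖g‖ ≤ R := mem_closedBall_zero_iff.1 (hGR hg)
    have hkR : ‖k‖ ≤ R := mem_closedBall_zero_iff.1 (hGR (hKG hk))
    calc ‖g + k‖ ≤ ‖g‖ + ‖k‖ := norm_add_le g k
      _ ≤ 2 * R := by linarith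
  have hVA : (volume A).toReal
      ≤ (volume (closedBall (0 : EuclideanSpace ℝ (Fin n)) (2 * R))).toReal :=
    ENNReal.toReal_mono measure_closedBall_lt_top.ne (measure_mono hAball)
  -- geometric estimate
  have hgeo : (1 + d / r) ^ n - 1 ≤ n * (1 + 2 * R / r) ^ (n - 1) * (d / r) :=
    pow_one_add_sub_one_le (div_nonneg hd0 hr.le) ((div_le_div_iff_of_pos_right hr).mpr hdR) n
  set VA := (volume A).toReal with hVAdef
  set Vb := (volume (closedBall (0 : EuclideanSpace ℝ (Fin n)) (2 * R))).toReal with hVbdef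
  have hVA0 : 0 ≤ VA := ENNReal.toReal_nonneg
  have hVb0 : 0 ≤ Vb := ENNReal.toReal_nonneg
  have hmul : ((1 + d / r) ^ n - 1) * VA ≤ (n * (1 + 2 * R / r) ^ (n - 1) * (d / r)) * Vb := by
    apply mul_le_mul hgeo hVA hVA0
    have h1 : (0:ℝ) ≤ 2 * R := le_trans hd0 hdR
    have h2 : (0:ℝ) ≤ 1 + 2 * R / r := by
      have := div_nonneg h1 hr.le; linarith
    exact mul_nonneg (mul_nonneg (Nat.cast_nonneg n) (pow_nonneg h2 (n - 1)))
      (div_nonneg hd0 hr.le)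
  have hGK : (volume (G + K)).toReal = VA := rfl
  calc (volume (G + S)).toReal ≤ (1 + d / r) ^ n * VA := hstep
    _ = VA + ((1 + d / r) ^ n - 1) * VA := by ring
    _ ≤ VA + (n * (1 + 2 * R / r) ^ (n - 1) * (d / r)) * Vb := by linarith
    _ = VA + (n * (1 + 2 * R / r) ^ (n - 1) * Vb / r) * d := by
        field_simp

theorem stmt2 {n : ℕ} (hn : 1 ≤ n) (G : Set (EuclideanSpace ℝ (Fin n)))
    (hGcv : Convex ℝ G) (hGcp : IsCompact G) (hGint : (interior G).Nonempty) :
    ∃ C : ℝ, 0 < C ∧ ∀ K L : Set (EuclideanSpace ℝ (Fin n)),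
      K.Nonempty → IsCompact K → Convex ℝ K → K ⊆ G →
      L.Nonempty → IsCompact L → Convex ℝ L → L ⊆ G →
      rhoDist G K L ≤ C * hausdorffDist K L := by
  classical
  obtain ⟨x0, hx0⟩ := hGint
  obtain ⟨ε, hε, hεball⟩ := Metric.isOpen_iff.1 isOpen_interior x0 hx0
  set r : ℝ := ε / 2 with hrdef
  have hr : 0 < r := by positivity
  have hball : closedBall x0 r ⊆ G := by
    intro y hy
    apply interior_subset
    apply hεball
    rw [mem_ball]
    rw [mem_closedBall] at hy
    have : r < ε := by rw [hrdef]; linarith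
    linarith
  obtain ⟨R0, hR0⟩ := hGcp.isBounded.subset_closedBall 0
  set R : ℝ := max R0 1 with hRdef
  have hR : 0 < R := lt_of_lt_of_le one_pos (le_max_right _ _)
  have hGR : G ⊆ closedBall 0 R :=
    hR0.trans (closedBall_subset_closedBall (le_max_left _ _))
  set Vb := (volume (closedBall (0 : EuclideanSpace ℝ (Fin n)) (2 * R))).toReal with hVbdef
  have hVb : 0 < Vb := by
    apply ENNReal.toReal_pos _ measure_closedBall_lt_top.ne
    exact (measure_closedBall_pos volume 0 (by positivity)).ne'
  set C0 : ℝ := n * (1 + 2 * R / r) ^ (n - 1) * Vb / r with hC0def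
  have hC0 : 0 < C0 := by
    have hpos : (0:ℝ) < 1 + 2 * R / r := by
      have : 0 < 2 * R / r := div_pos (by linarith) hr
      linarith
    have hnpos : (0:ℝ) < n := by exact_mod_cast Nat.pos_of_ne_zero (by omega)
    exact div_pos (mul_pos (mul_pos hnpos (pow_pos hpos _)) hVb) hr
  refine ⟨2 * C0, by linarith, ?_⟩
  intro K L hKne hKcp hKcv hKG hLne hLcp hLcv hLG
  set d := hausdorffDist K L with hddef
  have hd0 : 0 ≤ d := hausdorffDist_nonneg
  -- d ≤ 2R
  have hdR : d ≤ 2 * R := by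
    apply hausdorffDist_le_of_mem_dist (by positivity)
    · intro x hx
      obtain ⟨y, hy⟩ := hLne
      refine ⟨y, hy, ?_⟩
      have h1 : ‖x‖ ≤ R := mem_closedBall_zero_iff.1 (hGR (hKG hx))
      have h2 : ‖y‖ ≤ R := mem_closedBall_zero_iff.1 (hGR (hLG hy))
      calc dist x y = ‖x - y‖ := dist_eq_norm x y
        _ ≤ ‖x‖ + ‖y‖ := norm_sub_le x y
        _ ≤ 2 * R := by linarith
    · intro x hx
      obtain ⟨y, hy⟩ := hKne
      refine ⟨y, hy, ?_⟩
      have h1 : ‖x‖ ≤ R := mem_closedBall_zero_iff.1 (hGR (hLG hx))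
      have h2 : ‖y‖ ≤ R := mem_closedBall_zero_iff.1 (hGR (hKG hy))
      calc dist x y = ‖x - y‖ := dist_eq_norm x y
        _ ≤ ‖x‖ + ‖y‖ := norm_sub_le x y
        _ ≤ 2 * R := by linarith
  have hedist : EMetric.hausdorffEdist K L ≠ ⊤ :=
    hausdorffEdist_ne_top_of_nonempty_of_bounded hKne hLne hKcp.isBounded hLcp.isBounded
  -- L ⊆ K + closedBall 0 d
  have hLK : L ⊆ K + closedBall 0 d := by
    intro x hx
    obtain ⟨y, hy, hyd⟩ := hKcp.exists_infDist_eq_dist hKne x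
    have h1 : infDist x K ≤ d := by
      have h2 := infDist_le_hausdorffDist_of_mem hx
        (by rw [EMetric.hausdorffEdist] at hedist; rwa [Metric.hausdorffEDist_comm] at hedist)
      rwa [hausdorffDist_comm] at h2
    refine ⟨y, hy, x - y, ?_, by show y + (x - y) = x; rw [add_comm, sub_add_cancel]⟩
    rw [mem_closedBall_zero_iff, ← dist_eq_norm]
    rw [hyd] at h1
    exact h1
  have hKL : K ⊆ L + closedBall 0 d := by
    intro x hx
    obtain ⟨y, hy, hyd⟩ := hLcp.exists_infDist_eq_dist hLne x
    have h1 : infDist x L ≤ d := infDist_le_hausdorffDist_of_mem hx hedist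
    refine ⟨y, hy, x - y, ?_, by show y + (x - y) = x; rw [add_comm, sub_add_cancel]⟩
    rw [mem_closedBall_zero_iff, ← dist_eq_norm]
    rw [hyd] at h1
    exact h1
  set M : Set (EuclideanSpace ℝ (Fin n)) := closure (convexHull ℝ (K ∪ L)) with hMdef
  have hMcp : IsCompact M := by
    apply Bornology.IsBounded.isCompact_closure
    exact isBounded_convexHull.2 (hKcp.union hLcp).isBounded
  have hself : ∀ K' : Set (EuclideanSpace ℝ (Fin n)), K' ⊆ K' + closedBall 0 d := by
    intro K' x hx
    exact ⟨x, hx, 0, mem_closedBall_self hd0, add_zero x⟩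
  have hMK : M ⊆ K + closedBall 0 d := by
    apply closure_minimal _ (hKcp.add (isCompact_closedBall 0 d)).isClosed
    apply convexHull_min _ (hKcv.add (convex_closedBall 0 d))
    exact Set.union_subset (hself K) hLK
  have hML : M ⊆ L + closedBall 0 d := by
    apply closure_minimal _ (hLcp.add (isCompact_closedBall 0 d)).isClosed
    apply convexHull_min _ (hLcv.add (convex_closedBall 0 d))
    exact Set.union_subset hKL (hself L)
  have hb1 := vol_bound x0 hr G K M hball hGR hGcv hGcp hKcv hKcp hKne hKG hd0 hdR hMK
  have hb2 := vol_bound x0 hr G L M hball hGR hGcv hGcp hLcv hLcp hLne hLG hd0 hdR hML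
  rw [rhoDist]
  rw [← hVbdef] at hb1 hb2
  linarith
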